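/- For any binary form F of degree d ≥ 2 with non-zero discriminant, the minimal height 𝔪(F) = inf_{|det T| = 1} ℋ(F∘T) satisfies 𝔪(F) ≥ |D(F)|^{1/(2(d-1))}. -/

import Mathlib

open MvPolynomial Finset

/-- `D` is the discriminant of the binary form `F` of degree `d`. -/
def IsBinaryDiscriminantR (d : ℕ) (F : MvPolynomial (Fin 2) ℝ) (D : ℝ) : Prop :=
  ∃ L : Fin d → ℂ × ℂ,
    (∀ x y : ℂ, (aeval ![x, y]) F = ∏ i, ((L i).1 * x + (L i).2 * y)) ∧
    (D : ℂ) = ∏ i, ∏ j ∈ Finset.Ioi i,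
      ((L i).1 * (L j).2 - (L j).1 * (L i).2) ^ 2

/-- `H = ℋ(G)` for the binary form `G` of degree `d`. -/
def IsBinaryHeight (d : ℕ) (G : MvPolynomial (Fin 2) ℝ) (H : ℝ) : Prop :=
  ∃ L : Fin d → ℂ × ℂ,
    (∀ x y : ℂ, (aeval ![x, y]) G = ∏ i, ((L i).1 * x + (L i).2 * y)) ∧
    H = ∏ i, Real.sqrt (‖(L i).1‖ ^ 2 + ‖(L i).2‖ ^ 2)

/-- The substitution `F ∘ T` of a matrix `T` into a binary form. -/
noncomputable def formComp (F : MvPolynomial (Fin 2) ℝ) (T : Matrix (Fin 2) (Fin 2) ℝ) :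
    MvPolynomial (Fin 2) ℝ :=
  (bind₁ (fun i => C (T i 0) * X 0 + C (T i 1) * X 1)) F

/-- `𝔪(F)`: the infimum of `ℋ(F ∘ T)` over `T ∈ GL₂(ℝ)` with `|det T| = 1`. -/
noncomputable def minHeight (d : ℕ) (F : MvPolynomial (Fin 2) ℝ) : ℝ :=
  sInf {H | ∃ T : Matrix (Fin 2) (Fin 2) ℝ, |T.det| = 1 ∧ IsBinaryHeight d (formComp F T) H}

lemma prod_Ioi_comm {M : Type*} [CommMonoid M] {d : ℕ} (g : Fin d → Fin d → M) :
    ∏ i, ∏ j ∈ Ioi i, g i j = ∏ j, ∏ i ∈ Iio j, g i j :=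
  Finset.prod_comm' (by simp)

lemma prod_pairs {M : Type*} [CommMonoid M] {d : ℕ} (f : Fin d → M) :
    ∏ i, ∏ j ∈ Ioi i, (f i * f j) = ∏ i, f i ^ (d - 1) := by
  have h1 : ∀ i : Fin d, ∏ j ∈ Ioi i, (f i * f j)
      = f i ^ (Ioi i).card * ∏ j ∈ Ioi i, f j := fun i => by
    rw [prod_mul_distrib, prod_const]
  rw [prod_congr rfl fun i _ => h1 i, prod_mul_distrib,
    prod_Ioi_comm (fun i j => f j)]
  have h2 : ∀ j : Fin d, ∏ i ∈ Iio j, f j = f j ^ (Iio j).card := fun j => prod_const _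
  rw [prod_congr rfl fun j _ => h2 j, ← prod_mul_distrib]
  refine prod_congr rfl fun i _ => ?_
  rw [← pow_add, Fin.card_Ioi, Fin.card_Iio]
  congr 1
  omega

lemma prod_erase_split {M : Type*} [CommMonoid M] {d : ℕ} (g : Fin d → Fin d → M)
    (hsymm : ∀ i j, g i j = g j i) :
    ∏ i, ∏ j ∈ univ.erase i, g i j = ∏ i, ∏ j ∈ Ioi i, (g i j) ^ 2 := by
  have herase : ∀ i : Fin d, univ.erase i = Iio i ∪ Ioi i := by
    intro i; ext j
    simp only [mem_erase, mem_univ, and_true, mem_union, mem_Iio, mem_Ioi]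
    constructor
    · exact fun h => lt_or_gt_of_ne h
    · rintro (h | h) <;> omega
  have hdisj : ∀ i : Fin d, Disjoint (Iio i) (Ioi i) := fun i =>
    Finset.disjoint_left.2 fun j hj hj' => absurd (mem_Ioi.1 hj') (not_lt.2 (le_of_lt (mem_Iio.1 hj)))
  have h1 : ∀ i : Fin d, ∏ j ∈ univ.erase i, g i j
      = (∏ j ∈ Iio i, g i j) * ∏ j ∈ Ioi i, g i j := fun i => by
    rw [herase i, prod_union (hdisj i)]
  rw [prod_congr rfl fun i _ => h1 i, prod_mul_distrib]
  have h2 : ∏ i, ∏ j ∈ Iio i, g i j = ∏ i, ∏ j ∈ Ioi i, g i j := by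
    rw [← prod_Ioi_comm (fun i j => g j i)]
    exact prod_congr rfl fun i _ => prod_congr rfl fun j _ => hsymm j i
  rw [h2, ← prod_mul_distrib]
  exact prod_congr rfl fun i _ => by rw [← prod_mul_distrib]; exact prod_congr rfl fun j _ => (sq (g i j)).symm

section CorePoly
open Polynomial
lemma core {d : ℕ} (hd : 2 ≤ d) (a b : Fin d → ℂ) (ha : ∀ i, a i ≠ 0)
    (p : Polynomial ℂ) (hp : p = ∏ i, (Polynomial.C (a i) * Polynomial.X + Polynomial.C (b i))) :
    ∏ i, ∏ j ∈ Ioi i, (‖a i * b j - a j * b i‖) ^ 2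
      = ‖p.leadingCoeff‖ ^ (d - 2)
        * (p.roots.map fun r => ‖p.derivative.eval r‖).prod := by
  classical
  set ρ : Fin d → ℂ := fun i => -(b i / a i) with hρ
  set m : Polynomial ℂ := ∏ i, (Polynomial.X - Polynomial.C (ρ i)) with hm
  set A : ℂ := ∏ i, a i with hA
  have hA0 : A ≠ 0 := Finset.prod_ne_zero_iff.2 fun i _ => ha i
  have h1 : ∀ k, a k * ρ k = -(b k) := by
    intro k
    rw [hρ]
    field_simp
    rw [neg_inj, mul_comm, mul_div_assoc, div_self (ha k), mul_one]
  -- factor p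
  have hfac : ∀ i : Fin d, Polynomial.C (a i) * Polynomial.X + Polynomial.C (b i)
      = Polynomial.C (a i) * (Polynomial.X - Polynomial.C (ρ i)) := by
    intro i
    rw [mul_sub, ← Polynomial.C_mul, h1 i, map_neg, sub_neg_eq_add]
  have hpm : p = Polynomial.C A * m := by
    rw [hp, Finset.prod_congr rfl fun i _ => hfac i, Finset.prod_mul_distrib, hA, map_prod]
  have hmonic : m.Monic := monic_prod_of_monic _ _ fun i _ => monic_X_sub_C (ρ i)
  -- leading coefficient
  have hlead : p.leadingCoeff = A := by
    rw [hpm, leadingCoeff_mul, leadingCoeff_C, hmonic.leadingCoeff, mul_one]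
  -- roots
  have hroots : p.roots = Multiset.map ρ univ.val := by
    rw [hpm, roots_C_mul _ hA0, hm]
    have : (∏ i, (Polynomial.X - Polynomial.C (ρ i)))
        = ((Multiset.map ρ univ.val).map fun r => Polynomial.X - Polynomial.C r).prod := by
      rw [Multiset.map_map, Finset.prod_eq_multiset_prod]
      rfl
    rw [this, roots_multiset_prod_X_sub_C]
  -- derivative
  have hder : p.derivative = Polynomial.C A * m.derivative := by
    rw [hpm, derivative_mul, derivative_C, zero_mul, zero_add]
  -- eval of derivative of m at roots
  have hmder : ∀ k : Fin d, m.derivative.eval (ρ k) = ∏ j ∈ univ.erase k, (ρ k - ρ j) := by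
    intro k
    have hm2 : m = (Multiset.map (fun i => Polynomial.X - Polynomial.C (ρ i)) univ.val).prod := by
      rw [hm, Finset.prod_eq_multiset_prod]
    rw [hm2, derivative_prod]
    have : ∀ i : Fin d, (Multiset.map (fun i => Polynomial.X - Polynomial.C (ρ i))
          (univ.val.erase i)).prod * Polynomial.derivative (Polynomial.X - Polynomial.C (ρ i))
        = ∏ j ∈ univ.erase i, (Polynomial.X - Polynomial.C (ρ j)) := by
      intro i
      rw [derivative_sub, derivative_X, derivative_C, sub_zero, mul_one,
        Finset.prod_eq_multiset_prod, Finset.erase_val]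
    rw [Multiset.map_congr rfl fun i _ => this i]
    have hsum : (Multiset.map (fun i => ∏ j ∈ univ.erase i,
          (Polynomial.X - Polynomial.C (ρ j))) univ.val).sum
        = ∑ i, ∏ j ∈ univ.erase i, (Polynomial.X - Polynomial.C (ρ j)) := by
      rw [Finset.sum_eq_multiset_sum]
    rw [hsum, Polynomial.eval_finset_sum]
    rw [Finset.sum_eq_single k]
    · rw [Polynomial.eval_prod]
      exact Finset.prod_congr rfl fun j _ => by simp
    · intro i _ hik
      rw [Polynomial.eval_prod]
      refine Finset.prod_eq_zero (Finset.mem_erase.2 ⟨Ne.symm hik, mem_univ k⟩) ?_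
      simp
    · intro h; exact absurd (mem_univ k) h
  rw [hlead, hroots, hder]
  have hcross : ∀ i j : Fin d, a i * b j - a j * b i = a i * a j * (ρ i - ρ j) := by
    intro i j
    linear_combination a i * h1 j - a j * h1 i
  have hL : ∏ i, ∏ j ∈ Ioi i, (‖a i * b j - a j * b i‖) ^ 2
      = (∏ i, (‖a i‖ ^ 2) ^ (d - 1))
        * ∏ i, ∏ j ∈ Ioi i, (‖ρ i - ρ j‖) ^ 2 := by
    rw [← prod_pairs (fun i => ‖a i‖ ^ 2), ← Finset.prod_mul_distrib]
    refine Finset.prod_congr rfl fun i _ => ?_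
    rw [← Finset.prod_mul_distrib]
    refine Finset.prod_congr rfl fun j _ => ?_
    rw [hcross, norm_mul, norm_mul]
    ring
  rw [hL]
  have hmap : ((Multiset.map ρ univ.val).map
        fun r => ‖(Polynomial.C A * m.derivative).eval r‖).prod
      = ∏ k, ‖(Polynomial.C A * m.derivative).eval (ρ k)‖ := by
    rw [Multiset.map_map]
    exact (Finset.prod_eq_multiset_prod _ _).symm
  rw [hmap]
  have heval : ∀ k, ‖(Polynomial.C A * m.derivative).eval (ρ k)‖
      = ‖A‖ * ∏ j ∈ univ.erase k, ‖ρ k - ρ j‖ := by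
    intro k
    rw [Polynomial.eval_mul, Polynomial.eval_C, norm_mul, hmder k]
    exact congrArg (fun t => ‖A‖ * t) (norm_prod _ _)
  rw [Finset.prod_congr rfl fun k _ => heval k, Finset.prod_mul_distrib, Finset.prod_const,
    prod_erase_split (fun i j => ‖ρ i - ρ j‖)
      (fun i j => norm_sub_rev (ρ i) (ρ j)),
    Finset.card_univ, Fintype.card_fin]
  have habsA : ‖A‖ = ∏ i, ‖a i‖ := by
    rw [hA]
    exact norm_prod _ _
  have hcoef : ∏ i, (‖a i‖ ^ 2) ^ (d - 1)
      = (∏ i, ‖a i‖) ^ (d - 2) * (∏ i, ‖a i‖) ^ d := by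
    rw [← pow_add, ← Finset.prod_pow]
    refine Finset.prod_congr rfl fun i _ => ?_
    rw [← pow_mul]
    congr 1
    omega
  rw [habsA, ← mul_assoc, ← hcoef]

lemma absDisc_unique {d : ℕ} (hd : 2 ≤ d) (P Q : Fin d → ℂ × ℂ)
    (h : ∀ x y : ℂ, ∏ i, ((P i).1 * x + (P i).2 * y) = ∏ i, ((Q i).1 * x + (Q i).2 * y))
    (hP : ∀ i, P i ≠ 0) (hQ : ∀ i, Q i ≠ 0) :
    ∏ i, ∏ j ∈ Ioi i, (‖(P i).1 * (P j).2 - (P j).1 * (P i).2‖) ^ 2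
      = ∏ i, ∏ j ∈ Ioi i, (‖(Q i).1 * (Q j).2 - (Q j).1 * (Q i).2‖) ^ 2 := by
  classical
  obtain ⟨s, hs⟩ := Infinite.exists_notMem_finset
    ((univ.image fun i => -((P i).1 / (P i).2)) ∪ (univ.image fun i => -((Q i).1 / (Q i).2)))
  have key : ∀ u v : ℂ, (u, v) ≠ 0 → s ≠ -(u / v) → u + s * v ≠ 0 := by
    intro u v hne hs0 h0
    by_cases hv : v = 0
    · rw [hv, mul_zero, add_zero] at h0
      exact hne (by simp [h0, hv, Prod.ext_iff])
    · apply hs0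
      field_simp
      linear_combination h0
  have hsP : ∀ i, (P i).1 + s * (P i).2 ≠ 0 := fun i =>
    key _ _ (hP i) fun hc => hs (by
      rw [hc]
      exact Finset.mem_union_left _ (Finset.mem_image_of_mem _ (mem_univ i)))
  have hsQ : ∀ i, (Q i).1 + s * (Q i).2 ≠ 0 := fun i =>
    key _ _ (hQ i) fun hc => hs (by
      rw [hc]
      exact Finset.mem_union_right _ (Finset.mem_image_of_mem _ (mem_univ i)))
  set a : Fin d → ℂ := fun i => (P i).1 + s * (P i).2 with hadef
  set b : Fin d → ℂ := fun i => (P i).2 with hbdef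
  set c : Fin d → ℂ := fun i => (Q i).1 + s * (Q i).2 with hcdef
  set e : Fin d → ℂ := fun i => (Q i).2 with hedef
  set p : Polynomial ℂ := ∏ i, (Polynomial.C (a i) * Polynomial.X + Polynomial.C (b i)) with hpdef
  set q : Polynomial ℂ := ∏ i, (Polynomial.C (c i) * Polynomial.X + Polynomial.C (e i)) with hqdef
  have hpq : p = q := by
    apply Polynomial.funext
    intro t
    rw [hpdef, hqdef, Polynomial.eval_prod, Polynomial.eval_prod]
    have hh := h t (s * t + 1)
    calc ∏ i, Polynomial.eval t (Polynomial.C (a i) * Polynomial.X + Polynomial.C (b i))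
        = ∏ i, ((P i).1 * t + (P i).2 * (s * t + 1)) := by
          refine Finset.prod_congr rfl fun i _ => ?_
          simp [hadef, hbdef]
          ring
      _ = ∏ i, ((Q i).1 * t + (Q i).2 * (s * t + 1)) := hh
      _ = ∏ i, Polynomial.eval t (Polynomial.C (c i) * Polynomial.X + Polynomial.C (e i)) := by
          refine Finset.prod_congr rfl fun i _ => ?_
          simp [hcdef, hedef]
          ring
  have hPcross : ∀ i j : Fin d, (P i).1 * (P j).2 - (P j).1 * (P i).2
      = a i * b j - a j * b i := by
    intro i j
    simp only [hadef, hbdef]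
    ring
  have hQcross : ∀ i j : Fin d, (Q i).1 * (Q j).2 - (Q j).1 * (Q i).2
      = c i * e j - c j * e i := by
    intro i j
    simp only [hcdef, hedef]
    ring
  calc ∏ i, ∏ j ∈ Ioi i, (‖(P i).1 * (P j).2 - (P j).1 * (P i).2‖) ^ 2
      = ∏ i, ∏ j ∈ Ioi i, (‖a i * b j - a j * b i‖) ^ 2 := by
        exact Finset.prod_congr rfl fun i _ => Finset.prod_congr rfl fun j _ => by
          rw [hPcross i j]
    _ = ‖p.leadingCoeff‖ ^ (d - 2)
        * (p.roots.map fun r => ‖p.derivative.eval r‖).prod :=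
        core hd a b hsP p hpdef
    _ = ‖q.leadingCoeff‖ ^ (d - 2)
        * (q.roots.map fun r => ‖q.derivative.eval r‖).prod := by rw [hpq]
    _ = ∏ i, ∏ j ∈ Ioi i, (‖c i * e j - c j * e i‖) ^ 2 :=
        (core hd c e hsQ q hqdef).symm
    _ = ∏ i, ∏ j ∈ Ioi i, (‖(Q i).1 * (Q j).2 - (Q j).1 * (Q i).2‖) ^ 2 := by
        exact Finset.prod_congr rfl fun i _ => Finset.prod_congr rfl fun j _ => by
          rw [hQcross i j]

end CorePoly
lemma formComp_eval (F : MvPolynomial (Fin 2) ℝ) (T : Matrix (Fin 2) (Fin 2) ℝ) (x y : ℂ) :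
    (aeval ![x, y]) (formComp F T)
      = (aeval ![(T 0 0 : ℂ) * x + (T 0 1 : ℂ) * y, (T 1 0 : ℂ) * x + (T 1 1 : ℂ) * y]) F := by
  rw [formComp, aeval_bind₁]
  have hfun : (fun i => (aeval ![x, y]) (C (T i 0) * X 0 + C (T i 1) * X 1))
      = ![(T 0 0 : ℂ) * x + (T 0 1 : ℂ) * y, (T 1 0 : ℂ) * x + (T 1 1 : ℂ) * y] := by
    funext i
    fin_cases i <;> simp
  rw [hfun]

lemma formComp_factor {d : ℕ} (F : MvPolynomial (Fin 2) ℝ) (T : Matrix (Fin 2) (Fin 2) ℝ)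
    (L : Fin d → ℂ × ℂ)
    (hL : ∀ x y : ℂ, (aeval ![x, y]) F = ∏ i, ((L i).1 * x + (L i).2 * y)) (x y : ℂ) :
    (aeval ![x, y]) (formComp F T)
      = ∏ i, (((L i).1 * (T 0 0 : ℂ) + (L i).2 * (T 1 0 : ℂ)) * x
          + ((L i).1 * (T 0 1 : ℂ) + (L i).2 * (T 1 1 : ℂ)) * y) := by
  rw [formComp_eval, hL]
  exact Finset.prod_congr rfl fun i _ => by ring

lemma cs_bound (u v w z : ℂ) : ‖u * z - w * v‖ ^ 2
    ≤ (‖u‖ ^ 2 + ‖v‖ ^ 2) * (‖w‖ ^ 2 + ‖z‖ ^ 2) := by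
  have h1 : ‖u * z - w * v‖
      ≤ ‖u‖ * ‖z‖ + ‖w‖ * ‖v‖ := by
    calc ‖u * z - w * v‖ ≤ ‖u * z‖ + ‖w * v‖ := by
          rw [sub_eq_add_neg]
          refine le_trans (norm_add_le _ _) ?_
          rw [norm_neg]
      _ = ‖u‖ * ‖z‖ + ‖w‖ * ‖v‖ := by
          rw [norm_mul, norm_mul]
  have hsq : ‖u * z - w * v‖ ^ 2
      ≤ (‖u‖ * ‖z‖ + ‖w‖ * ‖v‖) ^ 2 :=
    pow_le_pow_left₀ (norm_nonneg _) h1 2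
  nlinarith [hsq, sq_nonneg (‖u‖ * ‖w‖ - ‖v‖ * ‖z‖),
    norm_nonneg u, norm_nonneg v, norm_nonneg w, norm_nonneg z]

lemma final_bound {d : ℕ} (hd : 2 ≤ d) (Da H : ℝ) (hDa : 0 ≤ Da) (hH : 0 ≤ H)
    (h : Da ≤ H ^ (2 * (d - 1))) : Da ^ (1 / (2 * ((d : ℝ) - 1))) ≤ H := by
  have h2 : (0 : ℝ) < 2 * ((d : ℝ) - 1) := by
    have : (2 : ℝ) ≤ (d : ℝ) := by exact_mod_cast hd
    linarith
  have hs : 0 ≤ 1 / (2 * ((d : ℝ) - 1)) := by positivity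
  calc Da ^ (1 / (2 * ((d : ℝ) - 1)))
      ≤ (H ^ (2 * (d - 1))) ^ (1 / (2 * ((d : ℝ) - 1))) := Real.rpow_le_rpow hDa h hs
    _ = H := by
        rw [← Real.rpow_natCast H (2 * (d - 1)), ← Real.rpow_mul hH]
        have hcast : ((2 * (d - 1) : ℕ) : ℝ) = 2 * ((d : ℝ) - 1) := by
          push_cast [Nat.cast_sub (by omega : 1 ≤ d)]
          ring
        rw [hcast, mul_one_div, div_self h2.ne', Real.rpow_one]

lemma exists_nonzero_eval {d : ℕ} (L : Fin d → ℂ × ℂ) (hL : ∀ i, L i ≠ 0) :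
    ∃ x y : ℂ, ∏ i, ((L i).1 * x + (L i).2 * y) ≠ 0 := by
  classical
  obtain ⟨s, hs⟩ := Infinite.exists_notMem_finset (univ.image fun i => -((L i).1 / (L i).2))
  refine ⟨1, s, Finset.prod_ne_zero_iff.2 fun i _ => ?_⟩
  rw [mul_one]
  intro h0
  by_cases hv : (L i).2 = 0
  · rw [hv, zero_mul, add_zero] at h0
    exact hL i (Prod.ext h0 hv)
  · refine hs (Finset.mem_image.2 ⟨i, mem_univ i, ?_⟩)
    field_simp
    linear_combination -h0

/-- `𝔪(F) ≥ |D(F)|^{1/(2(d-1))}`. -/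
theorem stmt_11 (d : ℕ) (hd : 2 ≤ d) (F : MvPolynomial (Fin 2) ℝ)
    (hF : F.IsHomogeneous d) (D : ℝ) (hD : IsBinaryDiscriminantR d F D) (hD0 : D ≠ 0) :
    |D| ^ (1 / (2 * ((d : ℝ) - 1))) ≤ minHeight d F := by
  classical
  obtain ⟨L, hL, hLD⟩ := hD
  have habsD : |D| = ∏ i, ∏ j ∈ Ioi i,
      (‖(L i).1 * (L j).2 - (L j).1 * (L i).2‖) ^ 2 := by
    calc |D| = ‖(D : ℂ)‖ := by rw [Complex.norm_real, Real.norm_eq_abs]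
      _ = ‖∏ i, ∏ j ∈ Finset.Ioi i,
          ((L i).1 * (L j).2 - (L j).1 * (L i).2) ^ 2‖ := by rw [hLD]
      _ = ∏ i, ∏ j ∈ Ioi i, (‖(L i).1 * (L j).2 - (L j).1 * (L i).2‖) ^ 2 := by
          rw [norm_prod]
          refine Finset.prod_congr rfl fun i _ => ?_
          rw [norm_prod]
          exact Finset.prod_congr rfl fun j _ => norm_pow _ 2
  apply le_csInf
  · refine ⟨∏ i, Real.sqrt (‖(L i).1‖ ^ 2 + ‖(L i).2‖ ^ 2), 1, ?_, L, ?_, rfl⟩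
    · simp
    · intro x y
      rw [formComp_factor F 1 L hL x y]
      refine Finset.prod_congr rfl fun i _ => ?_
      norm_num
  · rintro H ⟨T, hT, M, hM, hHdef⟩
    set L' : Fin d → ℂ × ℂ := fun i =>
      ((L i).1 * (T 0 0 : ℂ) + (L i).2 * (T 1 0 : ℂ),
       (L i).1 * (T 0 1 : ℂ) + (L i).2 * (T 1 1 : ℂ)) with hL'def
    have hL' : ∀ x y : ℂ, (aeval ![x, y]) (formComp F T)
        = ∏ i, ((L' i).1 * x + (L' i).2 * y) := fun x y => formComp_factor F T L hL x y
    have hdet : ∀ i j : Fin d, (L' i).1 * (L' j).2 - (L' j).1 * (L' i).2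
        = ((T.det : ℝ) : ℂ) * ((L i).1 * (L j).2 - (L j).1 * (L i).2) := by
      intro i j
      rw [Matrix.det_fin_two]
      simp only [hL'def]
      push_cast
      ring
    have habs' : ∏ i, ∏ j ∈ Ioi i,
        (‖(L' i).1 * (L' j).2 - (L' j).1 * (L' i).2‖) ^ 2 = |D| := by
      rw [habsD]
      refine Finset.prod_congr rfl fun i _ => Finset.prod_congr rfl fun j _ => ?_
      rw [hdet i j, norm_mul, Complex.norm_real, Real.norm_eq_abs, hT, one_mul]
    have hD' : |D| ≠ 0 := abs_ne_zero.2 hD0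
    have hL'0 : ∀ i, L' i ≠ 0 := by
      intro i hi
      apply hD'
      rw [← habs']
      have : Nontrivial (Fin d) := Fin.nontrivial_iff_two_le.2 hd
      obtain ⟨j, hj⟩ := exists_ne i
      have h1 : (L' i).1 = 0 := by rw [hi]; rfl
      have h2 : (L' i).2 = 0 := by rw [hi]; rfl
      rcases lt_or_gt_of_ne hj with hlt | hgt
      · refine Finset.prod_eq_zero (mem_univ j) (Finset.prod_eq_zero (mem_Ioi.2 hlt) ?_)
        rw [h1, h2]
        simp
      · refine Finset.prod_eq_zero (mem_univ i) (Finset.prod_eq_zero (mem_Ioi.2 hgt) ?_)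
        rw [h1, h2]
        simp
    have hM0 : ∀ i, M i ≠ 0 := by
      obtain ⟨x₀, y₀, hxy⟩ := exists_nonzero_eval L' hL'0
      intro i hi
      refine hxy (((hL' x₀ y₀).symm.trans (hM x₀ y₀)).trans ?_)
      exact Finset.prod_eq_zero (mem_univ i) (by simp [hi])
    have huniq : ∏ i, ∏ j ∈ Ioi i,
        (‖(M i).1 * (M j).2 - (M j).1 * (M i).2‖) ^ 2 = |D| := by
      rw [← habs']
      exact absDisc_unique hd M L' (fun x y => (hM x y).symm.trans (hL' x y)) hM0 hL'0
    set f : Fin d → ℝ := fun i => ‖(M i).1‖ ^ 2 + ‖(M i).2‖ ^ 2 with hfdef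
    have hf : ∀ i, 0 ≤ f i := fun i => by positivity
    have h1 : |D| ≤ ∏ i, ∏ j ∈ Ioi i, (f i * f j) := by
      rw [← huniq]
      refine Finset.prod_le_prod (fun i _ => Finset.prod_nonneg fun j _ => sq_nonneg _)
        fun i _ => Finset.prod_le_prod (fun j _ => sq_nonneg _) fun j _ => ?_
      exact cs_bound (M i).1 (M i).2 (M j).1 (M j).2
    have h2 : ∏ i, ∏ j ∈ Ioi i, (f i * f j) = ∏ i, f i ^ (d - 1) := prod_pairs f
    have h3 : H ^ (2 * (d - 1)) = ∏ i, f i ^ (d - 1) := by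
      rw [hHdef, ← Finset.prod_pow]
      refine Finset.prod_congr rfl fun i _ => ?_
      rw [pow_mul, Real.sq_sqrt (hf i)]
    have hH0 : 0 ≤ H := hHdef ▸ Finset.prod_nonneg fun i _ => Real.sqrt_nonneg _
    exact final_bound hd |D| H (abs_nonneg D) hH0 (by rw [h3, ← h2]; exact h1)
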